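/- arXiv:2206.03956 — 3 statements merged into one kernel-verified Lean document; each statement's English description precedes it below -/
import Mathlib

section
/- For the charge transfer function f(α) defined as 0 if α ≤ π/3, 3α/π − 1 if π/3 < α ≤ 2π/3, and 1 if α > 2π/3, if α₁,…,α₄ are positive reals summing to 2π, then f(α₁)+f(α₂)+f(α₃)+f(α₄) ≥ 1. -/
open Real

noncomputable def charge (α : ℝ) : ℝ :=
  if α ≤ π / 3 then 0 else if α ≤ 2 * π / 3 then 3 * α / π - 1 else 1

lemma charge_nonneg (α : ℝ) : 0 ≤ charge α := by
  unfold charge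
  have hπ := pi_pos
  split_ifs with h1 h2
  · exact le_refl 0
  · push_neg at h1
    rw [sub_nonneg, le_div_iff₀ hπ]
    linarith
  · norm_num

lemma charge_ge (α : ℝ) (h : α ≤ 2 * π / 3) : charge α ≥ 3 * α / π - 1 := by
  unfold charge
  have hπ := pi_pos
  split_ifs with h1 h2
  · rw [ge_iff_le, sub_nonpos, div_le_one hπ]; linarith
  · exact le_refl _

lemma charge_one (α : ℝ) (h : 2 * π / 3 < α) : charge α = 1 := by
  unfold charge
  have hπ := pi_pos
  rw [if_neg (by linarith), if_neg (by linarith)]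

theorem degree_four_vertex_charge (α₁ α₂ α₃ α₄ : ℝ)
    (h₁ : 0 < α₁) (h₂ : 0 < α₂) (h₃ : 0 < α₃) (h₄ : 0 < α₄)
    (hsum : α₁ + α₂ + α₃ + α₄ = 2 * π) :
    charge α₁ + charge α₂ + charge α₃ + charge α₄ ≥ 1 := by
  have hπ := pi_pos
  by_cases c1 : 2 * π / 3 < α₁
  · have := charge_one α₁ c1
    have := charge_nonneg α₂; have := charge_nonneg α₃; have := charge_nonneg α₄
    linarith
  by_cases c2 : 2 * π / 3 < α₂
  · have := charge_one α₂ c2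
    have := charge_nonneg α₁; have := charge_nonneg α₃; have := charge_nonneg α₄
    linarith
  by_cases c3 : 2 * π / 3 < α₃
  · have := charge_one α₃ c3
    have := charge_nonneg α₁; have := charge_nonneg α₂; have := charge_nonneg α₄
    linarith
  by_cases c4 : 2 * π / 3 < α₄
  · have := charge_one α₄ c4
    have := charge_nonneg α₁; have := charge_nonneg α₂; have := charge_nonneg α₃
    linarith
  push_neg at c1 c2 c3 c4
  have g1 := charge_ge α₁ c1
  have g2 := charge_ge α₂ c2
  have g3 := charge_ge α₃ c3
  have g4 := charge_ge α₄ c4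
  have : 3 * α₁ / π + 3 * α₂ / π + 3 * α₃ / π + 3 * α₄ / π = 6 := by
    field_simp; linarith
  linarith
end

section
/- For the charge transfer function f(α) defined as 0 if α ≤ π/3, 3α/π − 1 if π/3 < α ≤ 2π/3, and 1 if α > 2π/3, if α₁,…,α₅ are positive reals summing to 3π, then f(α₁)+⋯+f(α₅) ≤ 4. -/
open Real

lemma charge_le_one (α : ℝ) : charge α ≤ 1 := by
  unfold charge
  split_ifs with h1 h2
  · norm_num
  · rw [sub_le_iff_le_add, div_le_iff₀ pi_pos]
    nlinarith [pi_pos]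
  · exact le_refl 1

lemma charge_le_lin (α : ℝ) (h : π / 3 < α) : charge α ≤ 3 * α / π - 1 := by
  unfold charge
  split_ifs with h1 h2
  · rw [le_sub_iff_add_le, le_div_iff₀ pi_pos]
    nlinarith [pi_pos]
  · exact le_refl _
  · push_neg at h2
    rw [le_sub_iff_add_le, le_div_iff₀ pi_pos]
    nlinarith [pi_pos]

lemma charge_eq_zero (α : ℝ) (h : α ≤ π / 3) : charge α = 0 := by
  unfold charge; rw [if_pos h]

theorem pentagon_charge (α₁ α₂ α₃ α₄ α₅ : ℝ)
    (h₁ : 0 < α₁) (h₂ : 0 < α₂) (h₃ : 0 < α₃) (h₄ : 0 < α₄) (h₅ : 0 < α₅)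
    (hsum : α₁ + α₂ + α₃ + α₄ + α₅ = 3 * π) :
    charge α₁ + charge α₂ + charge α₃ + charge α₄ + charge α₅ ≤ 4 := by
  have c1 := charge_le_one α₁
  have c2 := charge_le_one α₂
  have c3 := charge_le_one α₃
  have c4 := charge_le_one α₄
  have c5 := charge_le_one α₅
  by_cases k1 : α₁ ≤ π / 3
  · rw [charge_eq_zero α₁ k1]; linarith
  by_cases k2 : α₂ ≤ π / 3
  · rw [charge_eq_zero α₂ k2]; linarith
  by_cases k3 : α₃ ≤ π / 3
  · rw [charge_eq_zero α₃ k3]; linarith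
  by_cases k4 : α₄ ≤ π / 3
  · rw [charge_eq_zero α₄ k4]; linarith
  by_cases k5 : α₅ ≤ π / 3
  · rw [charge_eq_zero α₅ k5]; linarith
  push_neg at k1 k2 k3 k4 k5
  have l1 := charge_le_lin α₁ k1
  have l2 := charge_le_lin α₂ k2
  have l3 := charge_le_lin α₃ k3
  have l4 := charge_le_lin α₄ k4
  have l5 := charge_le_lin α₅ k5
  have key : 3 * α₁ / π + 3 * α₂ / π + 3 * α₃ / π + 3 * α₄ / π + 3 * α₅ / π = 9 := by
    have hπ : π ≠ 0 := pi_ne_zero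
    field_simp
    linarith
  linarith
end

section
/- Suppose nonnegative integers n, n₁, n₂, n₃, n₄, f₃, and positive real b satisfy: (i) 4n₁+3n₂+2n₃+n₄ ≥ b + 6, (ii) f₃ ≥ n − √(π√3·n) + 8 whenever 4n₁+3n₂+2n₃+n₄ ≤ √(π√3·n), and (iii) b² > π√3·f₃. Then 4n₁+3n₂+2n₃+n₄ > √(π√3·n). -/
open Real

theorem main_arithmetic_core (n n₁ n₂ n₃ n₄ f₃ : ℕ) (b : ℝ) (hb : 0 < b)
    (h1 : (4 * n₁ + 3 * n₂ + 2 * n₃ + n₄ : ℝ) ≥ b + 6)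
    (h2 : (4 * n₁ + 3 * n₂ + 2 * n₃ + n₄ : ℝ) ≤ Real.sqrt (π * Real.sqrt 3 * n) →
      (f₃ : ℝ) ≥ (n : ℝ) - Real.sqrt (π * Real.sqrt 3 * n) + 8)
    (h3 : b ^ 2 > π * Real.sqrt 3 * f₃) :
    (4 * n₁ + 3 * n₂ + 2 * n₃ + n₄ : ℝ) > Real.sqrt (π * Real.sqrt 3 * n) := by
  by_contra h
  push_neg at h
  have hf := h2 h
  set c := π * Real.sqrt 3 with hc
  have hs3 : (1.7 : ℝ) < Real.sqrt 3 := by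
    nlinarith [Real.sq_sqrt (by norm_num : (3:ℝ) ≥ 0), Real.sqrt_nonneg 3]
  have hs3' : Real.sqrt 3 < 1.8 := by
    nlinarith [Real.sq_sqrt (by norm_num : (3:ℝ) ≥ 0), Real.sqrt_nonneg 3]
  have hc1 : c > 4.5 := by nlinarith [Real.pi_gt_three]
  have hc2 : c < 12 := by nlinarith [Real.pi_lt_d2, Real.pi_gt_three]
  have hr := Real.sqrt_nonneg (c * n)
  have hsq : (Real.sqrt (c*n))^2 = c*n := Real.sq_sqrt (by positivity)
  have hb6 : b ≤ Real.sqrt (c*n) - 6 := by linarith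
  have hcf : c * f₃ ≥ c * ((n : ℝ) - Real.sqrt (c*n) + 8) := by
    apply mul_le_mul_of_nonneg_left hf (by linarith)
  nlinarith [sq_nonneg b, mul_nonneg hr (le_of_lt (show (0:ℝ) < 12 - c by linarith))]
end
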